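/- The antiderivative identity ∫₀ˣ t^ℓ(1−t)^r dt = Σ_{i=0}^{r} [ℓ! r! / ((r−i)! (ℓ+i+1)!)] x^{ℓ+i+1}(1−x)^{r−i} holds for all real x and all non-negative integers ℓ, r. -/

import Mathlib

theorem beta_antiderivative (ℓ r : ℕ) (x : ℝ) :
    (∫ t in (0:ℝ)..x, t ^ ℓ * (1 - t) ^ r) =
      ∑ i ∈ Finset.range (r + 1),
        ((ℓ.factorial * r.factorial : ℝ) / ((r - i).factorial * (ℓ + i + 1).factorial)) *
          x ^ (ℓ + i + 1) * (1 - x) ^ (r - i) := by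
  have key : ∀ y : ℝ, HasDerivAt (fun y : ℝ => ∑ i ∈ Finset.range (r + 1),
      ((ℓ.factorial * r.factorial : ℝ) / ((r - i).factorial * (ℓ + i + 1).factorial)) *
        y ^ (ℓ + i + 1) * (1 - y) ^ (r - i)) (y ^ ℓ * (1 - y) ^ r) y := by
    intro y
    set g : ℕ → ℝ := fun i =>
      (ℓ.factorial * r.factorial : ℝ) / ((r - i).factorial * (ℓ + i).factorial) *
        y ^ (ℓ + i) * (1 - y) ^ (r - i) with hg
    set g' : ℕ → ℝ := fun i =>
      (ℓ.factorial * r.factorial : ℝ) / ((r - i).factorial * (ℓ + i + 1).factorial) *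
        ((r - i : ℕ) * (y ^ (ℓ + i + 1) * (1 - y) ^ (r - i - 1))) with hg'
    have hterm : ∀ i ∈ Finset.range (r + 1),
        HasDerivAt (fun x : ℝ =>
          ((ℓ.factorial * r.factorial : ℝ) / ((r - i).factorial * (ℓ + i + 1).factorial)) *
            x ^ (ℓ + i + 1) * (1 - x) ^ (r - i)) (g i - g' i) y := by
      intro i hi
      have h1 : HasDerivAt (fun x : ℝ => x ^ (ℓ + i + 1))
          ((ℓ + i + 1 : ℕ) * y ^ (ℓ + i)) y := by
        simpa using hasDerivAt_pow (ℓ + i + 1) y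
      have h2 : HasDerivAt (fun x : ℝ => (1 - x) ^ (r - i))
          (-((r - i : ℕ) * (1 - y) ^ (r - i - 1))) y := by
        have := (hasDerivAt_pow (r - i) (1 - y)).comp y
          ((hasDerivAt_const y (1:ℝ)).sub (hasDerivAt_id y))
        simpa [Function.comp_def] using this
      have h3 := (h1.mul h2).const_mul
        ((ℓ.factorial * r.factorial : ℝ) / ((r - i).factorial * (ℓ + i + 1).factorial))
      have hfun : (fun x : ℝ =>
          ((ℓ.factorial * r.factorial : ℝ) / ((r - i).factorial * (ℓ + i + 1).factorial)) *
            (x ^ (ℓ + i + 1) * (1 - x) ^ (r - i)))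
          = (fun x : ℝ =>
          ((ℓ.factorial * r.factorial : ℝ) / ((r - i).factorial * (ℓ + i + 1).factorial)) *
            x ^ (ℓ + i + 1) * (1 - x) ^ (r - i)) := by
        funext x; ring
      simp only [Pi.mul_apply] at h3
      rw [hfun] at h3
      have hfac : ((ℓ + i + 1).factorial : ℝ) = (ℓ + i + 1 : ℕ) * (ℓ + i).factorial := by
        exact_mod_cast congrArg (Nat.cast (R := ℝ)) (Nat.factorial_succ (ℓ + i))
      have hne1 : ((r - i).factorial : ℝ) ≠ 0 := by positivity
      have hne2 : ((ℓ + i).factorial : ℝ) ≠ 0 := by positivity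
      have hne4 : ((ℓ + i + 1 : ℕ) : ℝ) ≠ 0 := by positivity
      have hval : g i - g' i =
          ((ℓ.factorial * r.factorial : ℝ) / ((r - i).factorial * (ℓ + i + 1).factorial)) *
            ((ℓ + i + 1 : ℕ) * y ^ (ℓ + i) * (1 - y) ^ (r - i) +
              y ^ (ℓ + i + 1) * -((r - i : ℕ) * (1 - y) ^ (r - i - 1))) := by
        rw [hg, hg']
        simp only
        rw [hfac]
        field_simp
        ring
      rw [hval]
      exact h3
    have hsum := HasDerivAt.sum hterm
    have hsimp : ∑ i ∈ Finset.range (r + 1), (g i - g' i) = y ^ ℓ * (1 - y) ^ r := by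
      rw [Finset.sum_sub_distrib]
      have hG : ∑ i ∈ Finset.range (r + 1), g i
          = (∑ i ∈ Finset.range r, g (i + 1)) + g 0 := Finset.sum_range_succ' g r
      have hG' : ∑ i ∈ Finset.range (r + 1), g' i = ∑ i ∈ Finset.range r, g (i + 1) := by
        rw [Finset.sum_range_succ]
        have hlast : g' r = 0 := by simp [hg']
        rw [hlast, add_zero]
        apply Finset.sum_congr rfl
        intro i hi
        have hi' : i < r := Finset.mem_range.mp hi
        have hri : r - i = (r - i - 1) + 1 := by omega
        have hfacn : (r - i).factorial = (r - i) * (r - i - 1).factorial := by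
          have h := Nat.factorial_succ (r - i - 1)
          rw [← hri] at h
          exact h
        have hfac : ((r - i).factorial : ℝ) = ((r - i : ℕ) : ℝ) * (r - i - 1).factorial := by
          exact_mod_cast congrArg (Nat.cast (R := ℝ)) hfacn
        have hne : ((r - i : ℕ) : ℝ) ≠ 0 := by
          have h0 : 0 < r - i := by omega
          positivity
        have hne2 : ((r - i - 1).factorial : ℝ) ≠ 0 := by positivity
        have hne3 : ((ℓ + i + 1).factorial : ℝ) ≠ 0 := by positivity
        rw [hg, hg']
        simp only
        have e1 : ℓ + (i + 1) = ℓ + i + 1 := by ring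
        have e2 : r - (i + 1) = r - i - 1 := by omega
        rw [e1, e2, hfac]
        field_simp
      rw [hG, hG', add_sub_cancel_left, hg]
      simp only
      have h0 : ((ℓ.factorial * r.factorial : ℝ)) / ((r - 0).factorial * (ℓ + 0).factorial) = 1 := by
        simp only [Nat.sub_zero, Nat.add_zero]
        rw [mul_comm (r.factorial : ℝ)]
        exact div_self (by positivity)
      rw [h0]
      simp
    rw [hsimp] at hsum
    rw [Finset.sum_fn] at hsum
    exact hsum
  have hint : IntervalIntegrable (fun t : ℝ => t ^ ℓ * (1 - t) ^ r)
      MeasureTheory.volume 0 x := by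
    apply Continuous.intervalIntegrable
    fun_prop
  rw [intervalIntegral.integral_eq_sub_of_hasDerivAt (fun t _ => key t) hint]
  simp [zero_pow]
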